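/- arXiv:math/9710216 — 2 statements merged into one kernel-verified Lean document; each statement's English description precedes it below -/
import Mathlib

section
/- Amalgamation lemma: if κ ∈ K, s ≤^{apr}_κ t and s ≤^{pr}_κ v in Q, then t ∪ v ∈ Q, s ≤ t ∪ v, t ≤^{pr}_κ t ∪ v, and v ≤^{apr}_κ t ∪ v. In particular, dom(t) \ dom(s) and dom(v) \ dom(s) are disjoint. -/
open Cardinal Set

noncomputable section

attribute [local instance] Classical.propDecidable

/-- A forcing condition: a partial `{0,1}`-valued function on ordinals,
coded as an `Option Bool`-valued function. -/
abbrev Cond : Type 1 := Ordinal → Option Bool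

/-- The domain of a condition. -/
def cdom (q : Cond) : Set Ordinal := {i | (q i).isSome}

/-- The `E_κ`-equivalence class of `i` : `j E_κ i` iff `j + κ = i + κ` (ordinal addition). -/
def Ecl (κ : Cardinal) (i : Ordinal) : Set Ordinal := {j | j + κ.ord = i + κ.ord}

/-- The `E_{<κ}`-class of `i`, where `E_{<κ} = id ∪ ⋃ {E_θ : θ ∈ K ∩ κ}`. -/
def EclLt (K : Set Cardinal) (κ : Cardinal) (i : Ordinal) : Set Ordinal :=
  {i} ∪ ⋃ θ ∈ K ∩ Set.Iio κ, Ecl θ i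

/-- `θ_κ` : the least regular cardinal `≥ sup((K ∩ κ) ∪ {λ})`. -/
def theta (lam : Cardinal) (K : Set Cardinal) (κ : Cardinal) : Cardinal :=
  sInf {θ : Cardinal | θ.IsRegular ∧ sSup ((K ∩ Set.Iio κ) ∪ {lam}) ≤ θ}

/-- `A` grows from `X` to `Y` : `∅ ≠ A ∩ X ≠ A ∩ Y`. -/
def grows (A X Y : Set Ordinal) : Prop := (A ∩ X).Nonempty ∧ A ∩ X ≠ A ∩ Y

/-- Membership in the forcing `Q = Q_K`. -/
def inQ (lam mu : Cardinal) (K : Set Cardinal) (q : Cond) : Prop :=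
  cdom q ⊆ Set.Iio mu.ord ∧
    ∀ i < mu.ord, ∀ κ ∈ K, #↥(Ecl κ i ∩ cdom q) < Cardinal.lift.{1} (theta lam K κ)

/-- The set of `E_κ`-classes which grow from `X` to `Y`. -/
def growClasses (mu : Cardinal) (κ : Cardinal) (X Y : Set Ordinal) : Set (Set Ordinal) :=
  {A | (∃ i < mu.ord, A = Ecl κ i) ∧ grows A X Y}

/-- The forcing order: `p ⊆ q` and for each `κ ∈ K`, fewer than `θ_κ` many
`E_κ`-classes grow from `dom p` to `dom q`. -/
def condLe (lam mu : Cardinal) (K : Set Cardinal) (p q : Cond) : Prop :=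
  (∀ i b, p i = some b → q i = some b) ∧
    ∀ κ ∈ K, #↥(growClasses mu κ (cdom p) (cdom q)) < Cardinal.lift.{1} (theta lam K κ)

/-- Pure extension at `κ`: no `E_κ`-class represented in `dom p` grows. -/
def condLePr (lam mu : Cardinal) (K : Set Cardinal) (κ : Cardinal) (p q : Cond) : Prop :=
  condLe lam mu K p q ∧ ∀ i : Ordinal, ¬ grows (Ecl κ i) (cdom p) (cdom q)

/-- Apure extension at `κ`: no new `E_κ`-classes are represented in `dom q`. -/
def condLeApr (lam mu : Cardinal) (K : Set Cardinal) (κ : Cardinal) (p q : Cond) : Prop :=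
  condLe lam mu K p q ∧ ∀ i ∈ cdom q, (Ecl κ i ∩ cdom p).Nonempty

/-- Union of two conditions (as partial functions, left priority). -/
def unionC (p q : Cond) : Cond := fun i => (p i).orElse (fun _ => q i)

/-- Restriction of a condition to a set of ordinals. -/
def restrictC (q : Cond) (X : Set Ordinal) : Cond := fun ξ => if ξ ∈ X then q ξ else none

/-- Union of a family of conditions indexed by ordinals below `θo`. -/
def unionFam (f : Ordinal → Cond) (θo : Ordinal) : Cond :=
  fun ξ => if h : ∃ i, i < θo ∧ (f i ξ).isSome then f h.choose ξ else none

/-- Compatibility in `Q`: existence of a common upper bound in `Q`. -/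
def compatQ (lam mu : Cardinal) (K : Set Cardinal) (q₁ q₂ : Cond) : Prop :=
  ∃ r : Cond, inQ lam mu K r ∧ condLe lam mu K q₁ r ∧ condLe lam mu K q₂ r

/-- Standing ground-model hypotheses: `λ = λ^{<λ}` regular, `μ = μ^λ` regular,
`K ⊆ [λ, μ]` a set of regular cardinals with `λ, μ ∈ K`. -/
def GroundCtx (lam mu : Cardinal) (K : Set Cardinal) : Prop :=
  lam.IsRegular ∧ lam ^< lam = lam ∧ mu.IsRegular ∧ mu ^ lam = mu ∧
    (∀ κ ∈ K, κ.IsRegular ∧ lam ≤ κ ∧ κ ≤ mu) ∧ lam ∈ K ∧ mu ∈ K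

/-! ### Auxiliary lemmas -/

lemma mem_Ecl_self (κ : Cardinal) (i : Ordinal) : i ∈ Ecl κ i := rfl

lemma Ecl_mono {θ κ : Cardinal} (h : θ.ord ≤ κ.ord) {i j : Ordinal}
    (hj : j ∈ Ecl θ i) : j ∈ Ecl κ i := by
  have hd : θ.ord + (κ.ord - θ.ord) = κ.ord := Ordinal.add_sub_cancel_of_le h
  have : j + θ.ord + (κ.ord - θ.ord) = i + θ.ord + (κ.ord - θ.ord) := by rw [hj]
  exact (show j + κ.ord = i + κ.ord by simpa [add_assoc, hd] using this)

lemma theta_isRegular (lam : Cardinal.{0}) (K : Set Cardinal.{0}) (κ : Cardinal.{0}) :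
    (theta lam K κ).IsRegular := by
  have hne : {θ : Cardinal | θ.IsRegular ∧ sSup ((K ∩ Set.Iio κ) ∪ {lam}) ≤ θ}.Nonempty := by
    refine ⟨Order.succ (max (sSup ((K ∩ Set.Iio κ) ∪ {lam})) ℵ₀),
      Cardinal.isRegular_succ (le_max_right _ _),
      le_trans (le_max_left _ _) (Order.le_succ _)⟩
  exact (csInf_mem hne).1

lemma aleph0_le_lift_theta (lam : Cardinal.{0}) (K : Set Cardinal.{0}) (κ : Cardinal.{0}) :
    (ℵ₀ : Cardinal.{1}) ≤ Cardinal.lift.{1} (theta lam K κ) := by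
  have h := Cardinal.lift_le.{1,0}.mpr (theta_isRegular lam K κ).aleph0_le
  rwa [Cardinal.lift_aleph0] at h

lemma card_lt_of_subset_union {α : Type*} {A B C : Set α} {c : Cardinal}
    (hc : ℵ₀ ≤ c) (h : A ⊆ B ∪ C) (hB : #B < c) (hC : #C < c) : #A < c :=
  lt_of_le_of_lt (le_trans (Cardinal.mk_le_mk_of_subset h) (Cardinal.mk_union_le B C))
    (Cardinal.add_lt_of_lt hc hB hC)

lemma cdom_unionC (t v : Cond) : cdom (unionC t v) = cdom t ∪ cdom v := by
  ext i
  simp only [cdom, unionC, Set.mem_setOf_eq, Set.mem_union]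
  cases ht : t i <;> simp [Option.orElse]

lemma unionC_left {t v : Cond} {i : Ordinal} {b : Bool} (h : t i = some b) :
    unionC t v i = some b := by simp [unionC, h, Option.orElse]

/-- amalgamation: if `s ≤apr_κ t` and `s ≤pr_κ v`, then `t ∪ v ∈ Q`,
`s ≤ t ∪ v`, `t ≤pr_κ t ∪ v`, `v ≤apr_κ t ∪ v`, and
`dom t \ dom s` is disjoint from `dom v \ dom s`. -/
theorem stmt8 (lam mu : Cardinal) (K : Set Cardinal) (hctx : GroundCtx lam mu K)
    (κ : Cardinal) (hκ : κ ∈ K) (s t v : Cond)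
    (hs : inQ lam mu K s) (ht : inQ lam mu K t) (hv : inQ lam mu K v)
    (h1 : condLeApr lam mu K κ s t) (h2 : condLePr lam mu K κ s v) :
    inQ lam mu K (unionC t v) ∧ condLe lam mu K s (unionC t v) ∧
      condLePr lam mu K κ t (unionC t v) ∧ condLeApr lam mu K κ v (unionC t v) ∧
      (cdom t \ cdom s) ∩ (cdom v \ cdom s) = ∅ := by
  obtain ⟨⟨hst, hct⟩, hB⟩ := h1
  obtain ⟨⟨hsv, hcv⟩, hpr⟩ := h2
  -- domain inclusions
  have hsT : cdom s ⊆ cdom t := by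
    intro i hi
    obtain ⟨b, hb⟩ := Option.isSome_iff_exists.mp hi
    exact Option.isSome_iff_exists.mpr ⟨b, hst i b hb⟩
  have hsV : cdom s ⊆ cdom v := by
    intro i hi
    obtain ⟨b, hb⟩ := Option.isSome_iff_exists.mp hi
    exact Option.isSome_iff_exists.mpr ⟨b, hsv i b hb⟩
  -- Lemma A : the κ-class of a new point of v is disjoint from dom s
  have hA : ∀ j, j ∈ cdom v → j ∉ cdom s → Ecl κ j ∩ cdom s = ∅ := by
    intro j hjv hjs
    by_contra hne
    obtain ⟨m, hm⟩ := Set.nonempty_iff_ne_empty.mpr hne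
    refine hpr j ⟨⟨m, hm⟩, fun he => hjs ?_⟩
    have : j ∈ Ecl κ j ∩ cdom v := ⟨mem_Ecl_self κ j, hjv⟩
    rw [← he] at this
    exact this.2
  -- key lemma C
  have hC : ∀ (τ : Cardinal) (i k j : Ordinal), k ∈ Ecl τ i → k ∈ cdom t →
      j ∈ Ecl τ i → j ∈ cdom v → j ∉ cdom s → (Ecl τ i ∩ cdom s).Nonempty := by
    intro τ i k j hk hkt hj hjv hjs
    obtain ⟨m, hmk, hms⟩ := hB k hkt
    rcases le_total κ.ord τ.ord with hle | hle
    · have hmτ : m ∈ Ecl τ k := Ecl_mono hle hmk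
      have : m ∈ Ecl τ i := by
        show m + τ.ord = i + τ.ord
        rw [hmτ, hk]
      exact ⟨m, this, hms⟩
    · have hkj : k ∈ Ecl τ j := by
        show k + τ.ord = j + τ.ord
        rw [hk, hj]
      have hkκ : k ∈ Ecl κ j := Ecl_mono hle hkj
      have hmj : m ∈ Ecl κ j := by
        show m + κ.ord = j + κ.ord
        rw [hmk, hkκ]
      exact absurd (hA j hjv hjs) (Set.nonempty_iff_ne_empty.mp ⟨m, hmj, hms⟩)
  -- disjointness of the new parts
  have hdisj : ∀ i, i ∈ cdom t → i ∈ cdom v → i ∈ cdom s := by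
    intro i hit hiv
    by_contra his
    obtain ⟨m, hm⟩ := hB i hit
    have := hA i hiv his
    rw [this] at hm
    exact hm
  -- v extends into the union
  have hvu : ∀ i b, v i = some b → unionC t v i = some b := by
    intro i b hvi
    cases hti : t i with
    | none => simp [unionC, hti, Option.orElse, hvi]
    | some c =>
        have hit : i ∈ cdom t := by simp [cdom, hti]
        have hiv : i ∈ cdom v := by simp [cdom, hvi]
        obtain ⟨d, hd⟩ := Option.isSome_iff_exists.mp (hdisj i hit hiv)
        have h2' := hsv i d hd
        rw [hvi] at h2'
        rw [Option.some_inj.mp h2']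
        exact unionC_left (hst i d hd)
  -- no E_κ-class grows from dom t to dom (t ∪ v)
  have hprt : ∀ i, ¬ grows (Ecl κ i) (cdom t) (cdom (unionC t v)) := by
    rintro i ⟨⟨k, hk, hkt⟩, hneq⟩
    rw [cdom_unionC] at hneq
    have hsub : Ecl κ i ∩ cdom t ⊆ Ecl κ i ∩ (cdom t ∪ cdom v) :=
      Set.inter_subset_inter_right _ Set.subset_union_left
    obtain ⟨j, hj, hjt⟩ := Set.exists_of_ssubset (hsub.ssubset_of_ne hneq)
    have hjnt : j ∉ cdom t := fun h => hjt ⟨hj.1, h⟩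
    have hjv : j ∈ cdom v := hj.2.resolve_left hjnt
    have hjs : j ∉ cdom s := fun h => hjnt (hsT h)
    refine hpr i ⟨hC κ i k j hk hkt hj.1 hjv hjs, fun he => hjs ?_⟩
    have : j ∈ Ecl κ i ∩ cdom v := ⟨hj.1, hjv⟩
    rw [← he] at this
    exact this.2
  -- growth transfer: t-side
  have hGt : ∀ τ, growClasses mu τ (cdom t) (cdom (unionC t v)) ⊆
      growClasses mu τ (cdom s) (cdom v) := by
    rintro τ A ⟨⟨i, hi, rfl⟩, ⟨k, hk, hkt⟩, hneq⟩
    rw [cdom_unionC] at hneq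
    have hsub : Ecl τ i ∩ cdom t ⊆ Ecl τ i ∩ (cdom t ∪ cdom v) :=
      Set.inter_subset_inter_right _ Set.subset_union_left
    obtain ⟨j, hj, hjt⟩ := Set.exists_of_ssubset (hsub.ssubset_of_ne hneq)
    have hjnt : j ∉ cdom t := fun h => hjt ⟨hj.1, h⟩
    have hjv : j ∈ cdom v := hj.2.resolve_left hjnt
    have hjs : j ∉ cdom s := fun h => hjnt (hsT h)
    refine ⟨⟨i, hi, rfl⟩, hC τ i k j hk hkt hj.1 hjv hjs, fun he => hjs ?_⟩
    have : j ∈ Ecl τ i ∩ cdom v := ⟨hj.1, hjv⟩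
    rw [← he] at this
    exact this.2
  -- growth transfer: v-side
  have hGv : ∀ τ, growClasses mu τ (cdom v) (cdom (unionC t v)) ⊆
      growClasses mu τ (cdom s) (cdom t) := by
    rintro τ A ⟨⟨i, hi, rfl⟩, ⟨k, hk, hkv⟩, hneq⟩
    rw [cdom_unionC] at hneq
    have hsub : Ecl τ i ∩ cdom v ⊆ Ecl τ i ∩ (cdom t ∪ cdom v) :=
      Set.inter_subset_inter_right _ Set.subset_union_right
    obtain ⟨j, hj, hjv'⟩ := Set.exists_of_ssubset (hsub.ssubset_of_ne hneq)
    have hjnv : j ∉ cdom v := fun h => hjv' ⟨hj.1, h⟩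
    have hjt : j ∈ cdom t := hj.2.resolve_right hjnv
    have hjs : j ∉ cdom s := fun h => hjnv (hsV h)
    have hnes : (Ecl τ i ∩ cdom s).Nonempty := by
      by_cases hks : k ∈ cdom s
      · exact ⟨k, hk, hks⟩
      · exact hC τ i j k hj.1 hjt hk hkv hks
    refine ⟨⟨i, hi, rfl⟩, hnes, fun he => hjs ?_⟩
    have : j ∈ Ecl τ i ∩ cdom t := ⟨hj.1, hjt⟩
    rw [← he] at this
    exact this.2
  -- growth transfer: s-side
  have hGs : ∀ τ, growClasses mu τ (cdom s) (cdom (unionC t v)) ⊆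
      growClasses mu τ (cdom s) (cdom t) ∪ growClasses mu τ (cdom s) (cdom v) := by
    rintro τ A ⟨hEx, hne, hneq⟩
    by_cases h : A ∩ cdom s = A ∩ cdom t
    · refine Or.inr ⟨hEx, hne, fun he => hneq ?_⟩
      rw [cdom_unionC, Set.inter_union_distrib_left, ← h, ← he, Set.union_self]
    · exact Or.inl ⟨hEx, hne, h⟩
  have hdisj' : (cdom t \ cdom s) ∩ (cdom v \ cdom s) = ∅ := by
    apply Set.eq_empty_iff_forall_notMem.mpr
    rintro i ⟨⟨hit, his⟩, hiv, -⟩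
    exact his (hdisj i hit hiv)
  refine ⟨⟨?_, ?_⟩, ⟨?_, ?_⟩, ⟨⟨?_, ?_⟩, hprt⟩, ⟨⟨?_, ?_⟩, ?_⟩, hdisj'⟩
  -- inQ (unionC t v) : domain bound
  · rw [cdom_unionC]
    exact Set.union_subset ht.1 hv.1
  -- inQ : class size bound
  · intro i hi τ hτ
    refine card_lt_of_subset_union (aleph0_le_lift_theta lam K τ) ?_
      (ht.2 i hi τ hτ) (hv.2 i hi τ hτ)
    intro x hx
    rw [cdom_unionC, Set.inter_union_distrib_left] at hx
    exact hx
  -- s ≤ t ∪ v : function extension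
  · intro i b hb
    exact unionC_left (hst i b hb)
  -- s ≤ t ∪ v : growth count
  · intro τ hτ
    exact card_lt_of_subset_union (aleph0_le_lift_theta lam K τ) (hGs τ)
      (hct τ hτ) (hcv τ hτ)
  -- t ≤ t ∪ v : function extension
  · intro i b hb
    exact unionC_left hb
  -- t ≤ t ∪ v : growth count
  · intro τ hτ
    exact lt_of_le_of_lt (Cardinal.mk_le_mk_of_subset (hGt τ)) (hcv τ hτ)
  -- v ≤ t ∪ v : function extension
  · exact hvu
  -- v ≤ t ∪ v : growth count
  · intro τ hτ
    exact lt_of_le_of_lt (Cardinal.mk_le_mk_of_subset (hGv τ)) (hct τ hτ)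
  -- v ≤apr t ∪ v
  · intro i hi
    rw [cdom_unionC] at hi
    rcases hi with hit | hiv
    · obtain ⟨m, hm, hms⟩ := hB i hit
      exact ⟨m, hm, hsV hms⟩
    · exact ⟨i, mem_Ecl_self κ i, hiv⟩
end
end

section
/- For every κ ∈ K, the partial order (Q, ≤^{pr}_κ) is κ-complete: every ≤^{pr}_κ-increasing sequence (q_i : i < θ) of length θ < κ (θ regular) has a least upper bound, namely its union ⋃{q_i : i < θ}, which lies in Q and satisfies q_i ≤^{pr}_κ ⋃ q_j for all i < θ. -/
open Cardinal Set

noncomputable section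

attribute [local instance] Classical.propDecidable

section Auxiliary

lemma aux_lift_isRegular {c : Cardinal.{0}} (hc : c.IsRegular) :
    (Cardinal.lift.{1} c).IsRegular := by
  refine ⟨by simpa using Cardinal.lift_le.{1}.2 hc.1, ?_⟩
  rw [← Cardinal.lift_ord, ← Ordinal.lift_cof]
  exact Cardinal.lift_le.2 hc.2

lemma aux_exists {A X Y : Set Ordinal} (hXY : X ⊆ Y) (h : A ∩ X ≠ A ∩ Y) :
    ∃ y, y ∈ A ∧ y ∈ Y ∧ y ∉ X := by
  by_contra hcon
  push_neg at hcon
  exact h (Set.Subset.antisymm (Set.inter_subset_inter_right _ hXY)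
    (fun z hz => ⟨hz.1, hcon z hz.1 hz.2⟩))

lemma aux_grows_mono {A B X Y : Set Ordinal} (hAB : A ⊆ B) (hXY : X ⊆ Y)
    (h : grows A X Y) : grows B X Y := by
  obtain ⟨⟨x, hxA, hxX⟩, hne⟩ := h
  obtain ⟨y, hyA, hyY, hyX⟩ := aux_exists hXY hne
  refine ⟨⟨x, hAB hxA, hxX⟩, fun hEq => hyX ?_⟩
  have hy : y ∈ B ∩ Y := ⟨hAB hyA, hyY⟩
  rw [← hEq] at hy
  exact hy.2

lemma aux_Ecl_subset {τ κ : Cardinal} (hκ : ℵ₀ ≤ κ) (h : τ ≤ κ) (i : Ordinal) :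
    Ecl τ i ⊆ Ecl κ i := by
  rcases eq_or_lt_of_le h with rfl | hlt
  · exact subset_rfl
  · intro j hj
    have habs : τ.ord + κ.ord = κ.ord :=
      (Ordinal.principal_add_iff_add_left_eq_self.1 (Ordinal.isPrincipal_add_ord hκ)) _
        (Cardinal.ord_lt_ord.2 hlt)
    simp only [Ecl, Set.mem_setOf_eq] at hj ⊢
    rw [← habs, ← add_assoc, ← add_assoc, hj]

lemma aux_sub_biUnion_lt {α : Type 1} {ρ : Cardinal.{0}} (hρ : ρ.IsRegular) {θc : Cardinal.{0}}
    (hθρ : θc < ρ) {s : Ordinal → Set α} (hs : ∀ j < θc.ord, #↥(s j) < Cardinal.lift.{1} ρ)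
    {T : Set α} (hT : T ⊆ ⋃ j ∈ Set.Iio θc.ord, s j) :
    #↥T < Cardinal.lift.{1} ρ := by
  have hreg := aux_lift_isRegular hρ
  have hι : #↥(Set.Iio θc.ord) < Cardinal.lift.{1} ρ := by
    rw [Ordinal.mk_Iio_ordinal, Cardinal.card_ord]
    exact Cardinal.lift_lt.2 hθρ
  refine lt_of_le_of_lt (Cardinal.mk_le_mk_of_subset hT) ?_
  rw [Set.biUnion_eq_iUnion]
  refine lt_of_le_of_lt (Cardinal.mk_iUnion_le _) ?_
  exact Cardinal.mul_lt_of_lt hreg.1 hι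
    (Cardinal.iSup_lt_of_isRegular hreg hι (fun j => hs j j.2))

lemma theta_spec (lam : Cardinal) (K : Set Cardinal) (κ : Cardinal) :
    (theta lam K κ).IsRegular ∧ sSup ((K ∩ Set.Iio κ) ∪ {lam}) ≤ theta lam K κ := by
  have h : Order.succ (max (sSup ((K ∩ Set.Iio κ) ∪ {lam})) ℵ₀) ∈
      {θ : Cardinal | θ.IsRegular ∧ sSup ((K ∩ Set.Iio κ) ∪ {lam}) ≤ θ} :=
    ⟨Cardinal.isRegular_succ (le_max_right _ _), (le_max_left _ _).trans (Order.le_succ _)⟩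
  exact csInf_mem ⟨_, h⟩

lemma aux_le_theta {lam mu : Cardinal} {K : Set Cardinal} (hK : ∀ c ∈ K, c ≤ mu)
    {κ τ : Cardinal} (hκ : κ ∈ K) (hκτ : κ < τ) : κ ≤ theta lam K τ := by
  refine le_trans ?_ (theta_spec lam K τ).2
  refine le_csSup ⟨max mu lam, ?_⟩ (Or.inl ⟨hκ, hκτ⟩)
  rintro c (⟨hc, -⟩ | rfl)
  · exact (hK c hc).trans (le_max_left _ _)
  · exact le_max_right _ _

end Auxiliary

/-- `(Q, ≤pr_κ)` is `κ`-complete: every `≤pr_κ`-increasing sequence of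
regular length `θ < κ` has its union in `Q` as its `≤pr_κ`-least upper bound. -/
theorem stmt12 (lam mu : Cardinal) (K : Set Cardinal) (hctx : GroundCtx lam mu K)
    (κ : Cardinal) (hκ : κ ∈ K) (θ : Cardinal) (hθreg : θ.IsRegular) (hθκ : θ < κ)
    (f : Ordinal → Cond) (hfQ : ∀ i < θ.ord, inQ lam mu K (f i))
    (hmono : ∀ i j : Ordinal, i ≤ j → j < θ.ord → condLePr lam mu K κ (f i) (f j)) :
    inQ lam mu K (unionFam f θ.ord) ∧
      (∀ i < θ.ord, condLePr lam mu K κ (f i) (unionFam f θ.ord)) ∧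
      ∀ r, inQ lam mu K r → (∀ i < θ.ord, condLePr lam mu K κ (f i) r) →
        condLePr lam mu K κ (unionFam f θ.ord) r := by

  obtain ⟨hlreg, -, hmureg, -, hKreg, hlK, hmuK⟩ := hctx
  have hκω : ℵ₀ ≤ κ := (hKreg κ hκ).1.aleph0_le
  -- chain facts
  have chain_ext : ∀ a b : Ordinal, a ≤ b → b < θ.ord → ∀ ξ c, f a ξ = some c → f b ξ = some c :=
    fun a b hab hb => (hmono a b hab hb).1.1
  have chain_dom : ∀ a b : Ordinal, a ≤ b → b < θ.ord → cdom (f a) ⊆ cdom (f b) := by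
    intro a b hab hb ξ hξ
    obtain ⟨c, hc⟩ := Option.isSome_iff_exists.1 hξ
    exact Option.isSome_iff_exists.2 ⟨c, chain_ext a b hab hb ξ c hc⟩
  have key_ext : ∀ j, j < θ.ord → ∀ ξ c, f j ξ = some c → unionFam f θ.ord ξ = some c := by
    intro j hj ξ c hfc
    have hex : ∃ i, i < θ.ord ∧ (f i ξ).isSome := ⟨j, hj, by simp [hfc]⟩
    rw [unionFam, dif_pos hex]
    rcases le_total j hex.choose with h | h
    · exact chain_ext j hex.choose h hex.choose_spec.1 ξ c hfc
    · obtain ⟨c', hc'⟩ := Option.isSome_iff_exists.1 hex.choose_spec.2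
      have h2 := chain_ext hex.choose j h hj ξ c' hc'
      rw [h2] at hfc
      rw [hc', hfc]
  have key_elim : ∀ ξ c, unionFam f θ.ord ξ = some c → ∃ j, j < θ.ord ∧ f j ξ = some c := by
    intro ξ c hc
    rw [unionFam] at hc
    split at hc
    · next hex => exact ⟨hex.choose, hex.choose_spec.1, hc⟩
    · exact absurd hc (by simp)
  have sub_u : ∀ j, j < θ.ord → cdom (f j) ⊆ cdom (unionFam f θ.ord) := by
    intro j hj ξ hξ
    obtain ⟨c, hc⟩ := Option.isSome_iff_exists.1 hξ
    exact Option.isSome_iff_exists.2 ⟨c, key_ext j hj ξ c hc⟩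
  have mem_u : ∀ ξ, ξ ∈ cdom (unionFam f θ.ord) → ∃ j, j < θ.ord ∧ ξ ∈ cdom (f j) := by
    intro ξ hξ
    obtain ⟨c, hc⟩ := Option.isSome_iff_exists.1 hξ
    obtain ⟨j, hj, hjc⟩ := key_elim ξ c hc
    exact ⟨j, hj, Option.isSome_iff_exists.2 ⟨c, hjc⟩⟩
  -- the freezing fact: no E_κ-class meeting some f j grows up to the union
  have key_nogrow : ∀ j, j < θ.ord → ∀ m,
      ¬ grows (Ecl κ m) (cdom (f j)) (cdom (unionFam f θ.ord)) := by
    intro j hj m hg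
    obtain ⟨hne, hneq⟩ := hg
    obtain ⟨y, hyE, hyu, hyX⟩ := aux_exists (sub_u j hj) hneq
    obtain ⟨j', hj', hyj'⟩ := mem_u y hyu
    have hj'' : max j j' < θ.ord := max_lt hj hj'
    refine (hmono j (max j j') (le_max_left _ _) hj'').2 m ⟨hne, fun hEq => hyX ?_⟩
    have hy : y ∈ Ecl κ m ∩ cdom (f (max j j')) :=
      ⟨hyE, chain_dom j' (max j j') (le_max_right _ _) hj'' hyj'⟩
    rw [← hEq] at hy
    exact hy.2
  have hθτ_gt : ∀ τ ∈ K, κ < τ → θ < theta lam K τ :=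
    fun τ hτ hlt => lt_of_lt_of_le hθκ (aux_le_theta (fun c hc => (hKreg c hc).2.2) hκ hlt)
  refine ⟨⟨?_, ?_⟩, ?_, ?_⟩
  · -- domain bounded by μ
    intro ξ hξ
    obtain ⟨j, hj, hξj⟩ := mem_u ξ hξ
    exact (hfQ j hj).1 hξj
  · -- class-size bounds for the union
    intro m hm τ hτ
    rcases le_or_gt τ κ with hτκ | hκτ
    · by_cases hne : ∃ j, j < θ.ord ∧ (Ecl τ m ∩ cdom (f j)).Nonempty
      · obtain ⟨j, hj, hjn⟩ := hne
        refine lt_of_le_of_lt (Cardinal.mk_le_mk_of_subset ?_) ((hfQ j hj).2 m hm τ hτ)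
        rintro x ⟨hxE, hxu⟩
        obtain ⟨j', hj', hxj'⟩ := mem_u x hxu
        have hj'' : max j j' < θ.ord := max_lt hj hj'
        have hκne : (Ecl κ m ∩ cdom (f j)).Nonempty :=
          hjn.mono (Set.inter_subset_inter_left _ (aux_Ecl_subset hκω hτκ m))
        have hEq : Ecl κ m ∩ cdom (f j) = Ecl κ m ∩ cdom (f (max j j')) := by
          by_contra hne'
          exact (hmono j (max j j') (le_max_left _ _) hj'').2 m ⟨hκne, hne'⟩
        have hx : x ∈ Ecl κ m ∩ cdom (f (max j j')) :=
          ⟨aux_Ecl_subset hκω hτκ m hxE, chain_dom j' _ (le_max_right _ _) hj'' hxj'⟩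
        rw [← hEq] at hx
        exact ⟨hxE, hx.2⟩
      · push_neg at hne
        have hempty : Ecl τ m ∩ cdom (unionFam f θ.ord) = ∅ := by
          ext x
          simp only [Set.mem_inter_iff, Set.mem_empty_iff_false, iff_false, not_and]
          intro hxE hxu
          obtain ⟨j, hj, hxj⟩ := mem_u x hxu
          exact Set.eq_empty_iff_forall_notMem.1 (hne j hj) x ⟨hxE, hxj⟩
        rw [hempty]
        simpa using (aux_lift_isRegular (theta_spec lam K τ).1).pos
    · have hsub : Ecl τ m ∩ cdom (unionFam f θ.ord) ⊆
          ⋃ j ∈ Set.Iio θ.ord, (Ecl τ m ∩ cdom (f j)) := by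
        rintro x ⟨hxE, hxu⟩
        obtain ⟨j, hj, hxj⟩ := mem_u x hxu
        exact Set.mem_biUnion hj ⟨hxE, hxj⟩
      exact aux_sub_biUnion_lt (theta_spec lam K τ).1 (hθτ_gt τ hτ hκτ)
        (fun j hj => (hfQ j hj).2 m hm τ hτ) hsub
  · -- each f i is purely below the union
    intro i hi
    refine ⟨⟨key_ext i hi, ?_⟩, fun m => key_nogrow i hi m⟩
    intro τ hτ
    rcases le_or_gt τ κ with hτκ | hκτ
    · have hempty : growClasses mu τ (cdom (f i)) (cdom (unionFam f θ.ord)) = ∅ := by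
        ext A
        simp only [growClasses, Set.mem_setOf_eq, Set.mem_empty_iff_false, iff_false, not_and]
        rintro ⟨m, hm, rfl⟩ hg
        exact key_nogrow i hi m (aux_grows_mono (aux_Ecl_subset hκω hτκ m) (sub_u i hi) hg)
      rw [hempty]
      simpa using (aux_lift_isRegular (theta_spec lam K τ).1).pos
    · have hsub : growClasses mu τ (cdom (f i)) (cdom (unionFam f θ.ord)) ⊆
          ⋃ j ∈ Set.Iio θ.ord, growClasses mu τ (cdom (f i)) (cdom (f (max i j))) := by
        rintro A ⟨⟨m, hm, rfl⟩, hgne, hgneq⟩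
        obtain ⟨y, hyE, hyu, hyi⟩ := aux_exists (sub_u i hi) hgneq
        obtain ⟨j, hj, hyj⟩ := mem_u y hyu
        have hj' : max i j < θ.ord := max_lt hi hj
        refine Set.mem_biUnion hj ⟨⟨m, hm, rfl⟩, hgne, fun hEq => hyi ?_⟩
        have hy : y ∈ Ecl τ m ∩ cdom (f (max i j)) :=
          ⟨hyE, chain_dom j _ (le_max_right _ _) hj' hyj⟩
        rw [← hEq] at hy
        exact hy.2
      exact aux_sub_biUnion_lt (theta_spec lam K τ).1 (hθτ_gt τ hτ hκτ)
        (fun j hj => (hmono i (max i j) (le_max_left _ _) (max_lt hi hj)).1.2 τ hτ) hsub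
  · -- least upper bound property
    intro r hrQ hub
    have hsub_ur : ∀ ξ c, unionFam f θ.ord ξ = some c → r ξ = some c := by
      intro ξ c hc
      obtain ⟨j, hj, hjc⟩ := key_elim ξ c hc
      exact (hub j hj).1.1 ξ c hjc
    have hdom_ur : cdom (unionFam f θ.ord) ⊆ cdom r := by
      intro ξ hξ
      obtain ⟨c, hc⟩ := Option.isSome_iff_exists.1 hξ
      exact Option.isSome_iff_exists.2 ⟨c, hsub_ur ξ c hc⟩
    have nogrow_r : ∀ m, ¬ grows (Ecl κ m) (cdom (unionFam f θ.ord)) (cdom r) := by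
      intro m hg
      obtain ⟨⟨x, hxE, hxu⟩, hneq⟩ := hg
      obtain ⟨j, hj, hxj⟩ := mem_u x hxu
      obtain ⟨y, hyE, hyr, hyu⟩ := aux_exists hdom_ur hneq
      refine (hub j hj).2 m ⟨⟨x, hxE, hxj⟩, fun hEq => hyu ?_⟩
      have hy : y ∈ Ecl κ m ∩ cdom r := ⟨hyE, hyr⟩
      rw [← hEq] at hy
      exact sub_u j hj hy.2
    refine ⟨⟨hsub_ur, ?_⟩, nogrow_r⟩
    intro τ hτ
    rcases le_or_gt τ κ with hτκ | hκτ
    · have hempty : growClasses mu τ (cdom (unionFam f θ.ord)) (cdom r) = ∅ := by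
        ext A
        simp only [growClasses, Set.mem_setOf_eq, Set.mem_empty_iff_false, iff_false, not_and]
        rintro ⟨m, hm, rfl⟩ hg
        exact nogrow_r m (aux_grows_mono (aux_Ecl_subset hκω hτκ m) hdom_ur hg)
      rw [hempty]
      simpa using (aux_lift_isRegular (theta_spec lam K τ).1).pos
    · have hsub : growClasses mu τ (cdom (unionFam f θ.ord)) (cdom r) ⊆
          ⋃ j ∈ Set.Iio θ.ord, growClasses mu τ (cdom (f j)) (cdom r) := by
        rintro A ⟨⟨m, hm, rfl⟩, ⟨x, hxE, hxu⟩, hgneq⟩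
        obtain ⟨j, hj, hxj⟩ := mem_u x hxu
        obtain ⟨y, hyE, hyr, hyu⟩ := aux_exists hdom_ur hgneq
        refine Set.mem_biUnion hj ⟨⟨m, hm, rfl⟩, ⟨x, hxE, hxj⟩, fun hEq => hyu ?_⟩
        have hy : y ∈ Ecl τ m ∩ cdom r := ⟨hyE, hyr⟩
        rw [← hEq] at hy
        exact sub_u j hj hy.2
      exact aux_sub_biUnion_lt (theta_spec lam K τ).1 (hθτ_gt τ hτ hκτ)
        (fun j hj => (hub j hj).1.2 τ hτ) hsub
end
end
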